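/- If copies u̇ and v̇ embedded in the same face f have neighborhoods on the boundary of f whose cyclic orders interleave (there exist u1, x1, u2, x2 in this cyclic order around f with u1,u2 ∈ N(u̇) and x1,x2 ∈ N(v̇)), then the edges from u̇ and v̇ to their neighbors cannot all be drawn inside f without a crossing. -/

import Mathlib

/-- `H` is a minor of `G`, expressed via branch sets. -/
def GraphMinor {W V : Type} (H : SimpleGraph W) (G : SimpleGraph V) : Prop :=
  ∃ φ : W → Set V,
    (∀ w, (φ w).Nonempty) ∧
    (∀ w, (G.induce (φ w)).Connected) ∧
    (∀ w w', w ≠ w' → Disjoint (φ w) (φ w')) ∧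
    (∀ w w', H.Adj w w' → ∃ a ∈ φ w, ∃ b ∈ φ w', G.Adj a b)

/-- Planarity via Wagner's characterization: no `K₅` minor and no `K₃,₃` minor. -/
def GraphPlanar {V : Type} (G : SimpleGraph V) : Prop :=
  ¬ GraphMinor (SimpleGraph.completeGraph (Fin 5)) G ∧
  ¬ GraphMinor (completeBipartiteGraph (Fin 3) (Fin 3)) G

/-- The boundary cycle of the face `f` (on `Fin n`, with cyclic successor
adjacency), two copies `u̇ = inr 0` and `v̇ = inr 1` joined to their
neighborhoods `U` resp. `X` on the boundary, and an apex `inr 2` joined to all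
boundary vertices.  Planarity of this graph is equivalent to the existence of
a crossing-free drawing of both stars inside the disk bounded by the face
boundary. -/
def twoStarGraph (n : ℕ) (U X : Set (Fin n)) : SimpleGraph (Fin n ⊕ Fin 3) :=
  SimpleGraph.fromRel fun a b =>
    match a, b with
    | Sum.inl i, Sum.inl j => j.1 = (i.1 + 1) % n
    | Sum.inl i, Sum.inr t => (t = 0 ∧ i ∈ U) ∨ (t = 1 ∧ i ∈ X) ∨ t = 2
    | _, _ => False

private def fm (n : ℕ) (hn : 0 < n) (v : ℕ) : Fin n := ⟨v % n, Nat.mod_lt _ hn⟩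

/-- Sets of vertices given by a set of boundary positions and a set of inner copies. -/
private def arcSet (n : ℕ) (P : Set ℕ) (T : Set (Fin 3)) : Set (Fin n ⊕ Fin 3) :=
  fun x => Sum.elim (fun i => i.1 ∈ P) (fun t => t ∈ T) x

private lemma mem_arc_inl {n : ℕ} {P : Set ℕ} {T : Set (Fin 3)} {i : Fin n} :
    Sum.inl i ∈ arcSet n P T ↔ i.1 ∈ P := Iff.rfl

private lemma mem_arc_inr {n : ℕ} {P : Set ℕ} {T : Set (Fin 3)} {t : Fin 3} :
    Sum.inr t ∈ arcSet n P T ↔ t ∈ T := Iff.rfl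

private lemma tsg_adj_cycle {n : ℕ} {U X : Set (Fin n)} {i j : Fin n}
    (hne : i.1 ≠ j.1) (hj : j.1 = (i.1 + 1) % n) :
    (twoStarGraph n U X).Adj (Sum.inl i) (Sum.inl j) := by
  rw [twoStarGraph, SimpleGraph.fromRel_adj]
  exact ⟨fun h => hne (by cases h; rfl), Or.inl hj⟩

private lemma tsg_adj_inr {n : ℕ} {U X : Set (Fin n)} {i : Fin n} {t : Fin 3}
    (h : (t = 0 ∧ i ∈ U) ∨ (t = 1 ∧ i ∈ X) ∨ t = 2) :
    (twoStarGraph n U X).Adj (Sum.inl i) (Sum.inr t) := by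
  rw [twoStarGraph, SimpleGraph.fromRel_adj]
  exact ⟨by simp, Or.inl h⟩

private lemma tsg_adj_mod {n : ℕ} {U X : Set (Fin n)} (hn2 : 2 ≤ n) (hn : 0 < n) (v : ℕ) :
    (twoStarGraph n U X).Adj (Sum.inl (fm n hn v)) (Sum.inl (fm n hn (v + 1))) := by
  have h1 : (1 : ℕ) % n = 1 := Nat.mod_eq_of_lt (by omega)
  have hj : (v + 1) % n = (v % n + 1) % n := by
    conv_lhs => rw [Nat.add_mod, h1]
  have hne : v % n ≠ (v + 1) % n := by
    rw [hj]
    rcases Nat.lt_or_ge (v % n + 1) n with h | h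
    · rw [Nat.mod_eq_of_lt h]; omega
    · have h2 : v % n < n := Nat.mod_lt _ hn
      have h3 : v % n + 1 = n := by omega
      rw [h3, Nat.mod_self]; omega
  exact tsg_adj_cycle hne hj

private lemma arc_disjoint {n : ℕ} {P1 P2 : Set ℕ} {T1 T2 : Set (Fin 3)}
    (hP : ∀ m, m ∈ P1 → m ∈ P2 → False) (hT : ∀ t, t ∈ T1 → t ∈ T2 → False) :
    Disjoint (arcSet n P1 T1) (arcSet n P2 T2) := by
  rw [Set.disjoint_left]
  rintro (i | t) h1 h2
  exacts [hP _ h1 h2, hT _ h1 h2]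

private lemma connected_of_chain {V : Type} (G : SimpleGraph V) (S : Set V) (f : ℕ → V) (k : ℕ)
    (hmem : ∀ m, m ≤ k → f m ∈ S)
    (hadj : ∀ m, m < k → G.Adj (f m) (f (m + 1)))
    (hcover : ∀ x ∈ S, ∃ m, m ≤ k ∧ f m = x) :
    (G.induce S).Connected := by
  have key : ∀ m, (hm : m ≤ k) →
      (G.induce S).Reachable ⟨f 0, hmem 0 (Nat.zero_le _)⟩ ⟨f m, hmem m hm⟩ := by
    intro m
    induction m with
    | zero => intro _; exact SimpleGraph.Reachable.refl _
    | succ m ih =>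
      intro hm
      refine (ih (by omega)).trans (SimpleGraph.Adj.reachable ?_)
      exact hadj m (by omega)
  rw [SimpleGraph.connected_iff]
  refine ⟨?_, ⟨⟨f 0, hmem 0 (Nat.zero_le _)⟩⟩⟩
  intro x y
  obtain ⟨mx, hmx, hfx⟩ := hcover x.1 x.2
  obtain ⟨my, hmy, hfy⟩ := hcover y.1 y.2
  have ex : x = ⟨f mx, hmem mx hmx⟩ := Subtype.ext hfx.symm
  have ey : y = ⟨f my, hmem my hmy⟩ := Subtype.ext hfy.symm
  rw [ex, ey]
  exact (key mx hmx).symm.trans (key my hmy)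

/-- If the neighborhoods of the two copies `u̇` and `v̇` placed inside the face
`f` interleave in the cyclic order of the boundary of `f` (there are boundary
vertices `a < b < c < d` with `a, c ∈ N(u̇)` and `b, d ∈ N(v̇)`), then the
edges from `u̇` and `v̇` to their neighbors cannot all be drawn inside `f`
without a crossing. -/
theorem stmt17 (n : ℕ) (U X : Set (Fin n)) (a b c d : Fin n)
    (hab : a < b) (hbc : b < c) (hcd : c < d)
    (ha : a ∈ U) (hc : c ∈ U) (hb : b ∈ X) (hd : d ∈ X) :
    ¬ GraphPlanar (twoStarGraph n U X) := by
  rintro ⟨h5, -⟩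
  apply h5
  have hab' : a.1 < b.1 := hab
  have hbc' : b.1 < c.1 := hbc
  have hcd' : c.1 < d.1 := hcd
  have hdn : d.1 < n := d.2
  have hn : 0 < n := by omega
  have hn2 : 2 ≤ n := by omega
  refine ⟨![arcSet n {m | a.1 ≤ m ∧ m < b.1} {0},
            arcSet n {m | b.1 ≤ m ∧ m < c.1} {1},
            arcSet n {m | c.1 ≤ m ∧ m < d.1} ∅,
            arcSet n {m | d.1 ≤ m ∨ m < a.1} ∅,
            arcSet n ∅ {2}], ?_, ?_, ?_, ?_⟩
  · -- nonempty
    intro w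
    fin_cases w
    · exact ⟨Sum.inr 0, rfl⟩
    · exact ⟨Sum.inr 1, rfl⟩
    · exact ⟨Sum.inl c, ⟨le_rfl, hcd'⟩⟩
    · exact ⟨Sum.inl d, Or.inl le_rfl⟩
    · exact ⟨Sum.inr 2, rfl⟩
  · -- connected
    intro w
    fin_cases w
    · -- branch set of u̇ : {inr 0} ∪ [a, b)
      refine connected_of_chain _ _
        (fun m => match m with
          | 0 => Sum.inr 0
          | Nat.succ m => Sum.inl (fm n hn (a.1 + m))) (b.1 - a.1) ?_ ?_ ?_
      · intro m hm
        rcases m with _ | m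
        · exact rfl
        · show a.1 ≤ (a.1 + m) % n ∧ (a.1 + m) % n < b.1
          have e : (a.1 + m) % n = a.1 + m := Nat.mod_eq_of_lt (by omega)
          omega
      · intro m hm
        rcases m with _ | m
        · show (twoStarGraph n U X).Adj (Sum.inr 0) (Sum.inl (fm n hn (a.1 + 0)))
          have e : fm n hn (a.1 + 0) = a := Fin.ext (by
            show (a.1 + 0) % n = a.1
            rw [Nat.add_zero]; exact Nat.mod_eq_of_lt a.2)
          rw [e]
          exact (tsg_adj_inr (Or.inl ⟨rfl, ha⟩)).symm
        · exact tsg_adj_mod hn2 hn (a.1 + m)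
      · rintro (i | t) hx
        · have hx' : a.1 ≤ i.1 ∧ i.1 < b.1 := hx
          refine ⟨i.1 - a.1 + 1, by omega, ?_⟩
          show Sum.inl (fm n hn (a.1 + (i.1 - a.1))) = Sum.inl i
          congr 1
          apply Fin.ext
          show (a.1 + (i.1 - a.1)) % n = i.1
          rw [show a.1 + (i.1 - a.1) = i.1 from by omega]
          exact Nat.mod_eq_of_lt i.2
        · refine ⟨0, by omega, ?_⟩
          have : t = 0 := hx
          rw [this]
    · -- branch set of v̇ : {inr 1} ∪ [b, c)
      refine connected_of_chain _ _
        (fun m => match m with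
          | 0 => Sum.inr 1
          | Nat.succ m => Sum.inl (fm n hn (b.1 + m))) (c.1 - b.1) ?_ ?_ ?_
      · intro m hm
        rcases m with _ | m
        · exact rfl
        · show b.1 ≤ (b.1 + m) % n ∧ (b.1 + m) % n < c.1
          have e : (b.1 + m) % n = b.1 + m := Nat.mod_eq_of_lt (by omega)
          omega
      · intro m hm
        rcases m with _ | m
        · show (twoStarGraph n U X).Adj (Sum.inr 1) (Sum.inl (fm n hn (b.1 + 0)))
          have e : fm n hn (b.1 + 0) = b := Fin.ext (by
            show (b.1 + 0) % n = b.1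
            rw [Nat.add_zero]; exact Nat.mod_eq_of_lt b.2)
          rw [e]
          exact (tsg_adj_inr (Or.inr (Or.inl ⟨rfl, hb⟩))).symm
        · exact tsg_adj_mod hn2 hn (b.1 + m)
      · rintro (i | t) hx
        · have hx' : b.1 ≤ i.1 ∧ i.1 < c.1 := hx
          refine ⟨i.1 - b.1 + 1, by omega, ?_⟩
          show Sum.inl (fm n hn (b.1 + (i.1 - b.1))) = Sum.inl i
          congr 1
          apply Fin.ext
          show (b.1 + (i.1 - b.1)) % n = i.1
          rw [show b.1 + (i.1 - b.1) = i.1 from by omega]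
          exact Nat.mod_eq_of_lt i.2
        · refine ⟨0, by omega, ?_⟩
          have : t = 1 := hx
          rw [this]
    · -- arc [c, d)
      refine connected_of_chain _ _
        (fun m => Sum.inl (fm n hn (c.1 + m))) (d.1 - c.1 - 1) ?_ ?_ ?_
      · intro m hm
        show c.1 ≤ (c.1 + m) % n ∧ (c.1 + m) % n < d.1
        have e : (c.1 + m) % n = c.1 + m := Nat.mod_eq_of_lt (by omega)
        omega
      · intro m hm
        exact tsg_adj_mod hn2 hn (c.1 + m)
      · rintro (i | t) hx
        · have hx' : c.1 ≤ i.1 ∧ i.1 < d.1 := hx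
          refine ⟨i.1 - c.1, by omega, ?_⟩
          show Sum.inl (fm n hn (c.1 + (i.1 - c.1))) = Sum.inl i
          congr 1
          apply Fin.ext
          show (c.1 + (i.1 - c.1)) % n = i.1
          rw [show c.1 + (i.1 - c.1) = i.1 from by omega]
          exact Nat.mod_eq_of_lt i.2
        · exact absurd hx (by simp [mem_arc_inr])
    · -- wrap arc [d, n) ∪ [0, a)
      refine connected_of_chain _ _
        (fun m => Sum.inl (fm n hn (d.1 + m))) (n - d.1 + a.1 - 1) ?_ ?_ ?_
      · intro m hm
        show d.1 ≤ (d.1 + m) % n ∨ (d.1 + m) % n < a.1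
        rcases Nat.lt_or_ge (d.1 + m) n with h | h
        · left; rw [Nat.mod_eq_of_lt h]; omega
        · right
          have e : (d.1 + m) % n = d.1 + m - n := by
            rw [Nat.mod_eq_sub_mod h]
            exact Nat.mod_eq_of_lt (by omega)
          omega
      · intro m hm
        exact tsg_adj_mod hn2 hn (d.1 + m)
      · rintro (i | t) hx
        · have hx' : d.1 ≤ i.1 ∨ i.1 < a.1 := hx
          rcases hx' with h | h
          · refine ⟨i.1 - d.1, by omega, ?_⟩
            show Sum.inl (fm n hn (d.1 + (i.1 - d.1))) = Sum.inl i
            congr 1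
            apply Fin.ext
            show (d.1 + (i.1 - d.1)) % n = i.1
            rw [show d.1 + (i.1 - d.1) = i.1 from by omega]
            exact Nat.mod_eq_of_lt i.2
          · refine ⟨n - d.1 + i.1, by omega, ?_⟩
            show Sum.inl (fm n hn (d.1 + (n - d.1 + i.1))) = Sum.inl i
            congr 1
            apply Fin.ext
            show (d.1 + (n - d.1 + i.1)) % n = i.1
            rw [show d.1 + (n - d.1 + i.1) = n + i.1 from by omega, Nat.add_mod_left]
            exact Nat.mod_eq_of_lt i.2
        · exact absurd hx (by simp [mem_arc_inr])
    · -- apex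
      refine connected_of_chain _ _ (fun _ => Sum.inr 2) 0 ?_ ?_ ?_
      · intro m hm; exact rfl
      · intro m hm; omega
      · rintro (i | t) hx
        · exact absurd hx (by simp [mem_arc_inl])
        · have : t = 2 := hx
          exact ⟨0, le_rfl, by rw [this]⟩
  · -- disjoint
    intro w w' hww
    fin_cases w <;> fin_cases w' <;>
      first
        | exact absurd rfl hww
        | exact arc_disjoint
            (fun m h1 h2 => by
              simp only [Set.mem_setOf_eq, Set.mem_empty_iff_false] at h1 h2 <;>
                omega)
            (fun t h1 h2 => by
              simp only [Set.mem_singleton_iff, Set.mem_empty_iff_false] at h1 h2 <;>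
                (subst h1; exact absurd h2 (by decide)))
  · -- edges
    intro w w' hadj
    have hne : w ≠ w' := hadj
    fin_cases w <;> fin_cases w' <;> first
      | exact absurd rfl hne
      | skip
    -- 0,1
    · refine ⟨Sum.inl (fm n hn (b.1 - 1)), ?_, Sum.inl (fm n hn (b.1 - 1 + 1)), ?_,
        tsg_adj_mod hn2 hn (b.1 - 1)⟩
      · show a.1 ≤ (b.1 - 1) % n ∧ (b.1 - 1) % n < b.1
        have e : (b.1 - 1) % n = b.1 - 1 := Nat.mod_eq_of_lt (by omega)
        omega
      · show b.1 ≤ (b.1 - 1 + 1) % n ∧ (b.1 - 1 + 1) % n < c.1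
        have e : (b.1 - 1 + 1) % n = b.1 := by
          rw [show b.1 - 1 + 1 = b.1 from by omega]
          exact Nat.mod_eq_of_lt b.2
        omega
    -- 0,2
    · exact ⟨Sum.inr 0, rfl, Sum.inl c, ⟨le_rfl, hcd'⟩,
        (tsg_adj_inr (Or.inl ⟨rfl, hc⟩)).symm⟩
    -- 0,3
    · refine ⟨Sum.inl (fm n hn (a.1 + n - 1 + 1)), ?_, Sum.inl (fm n hn (a.1 + n - 1)), ?_,
        (tsg_adj_mod hn2 hn (a.1 + n - 1)).symm⟩
      · show a.1 ≤ (a.1 + n - 1 + 1) % n ∧ (a.1 + n - 1 + 1) % n < b.1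
        have e : (a.1 + n - 1 + 1) % n = a.1 := by
          rw [show a.1 + n - 1 + 1 = n + a.1 from by omega, Nat.add_mod_left]
          exact Nat.mod_eq_of_lt a.2
        omega
      · show d.1 ≤ (a.1 + n - 1) % n ∨ (a.1 + n - 1) % n < a.1
        rcases Nat.eq_zero_or_pos a.1 with h0 | h0
        · left
          have e : (a.1 + n - 1) % n = n - 1 := by
            rw [show a.1 + n - 1 = n - 1 from by omega]
            exact Nat.mod_eq_of_lt (by omega)
          omega
        · right
          have e : (a.1 + n - 1) % n = a.1 - 1 := by
            rw [show a.1 + n - 1 = n + (a.1 - 1) from by omega, Nat.add_mod_left]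
            exact Nat.mod_eq_of_lt (by omega)
          omega
    -- 0,4
    · exact ⟨Sum.inl a, ⟨le_rfl, hab'⟩, Sum.inr 2, rfl,
        tsg_adj_inr (Or.inr (Or.inr rfl))⟩
    -- 1,0
    · refine ⟨Sum.inl (fm n hn (b.1 - 1 + 1)), ?_, Sum.inl (fm n hn (b.1 - 1)), ?_,
        (tsg_adj_mod hn2 hn (b.1 - 1)).symm⟩
      · show b.1 ≤ (b.1 - 1 + 1) % n ∧ (b.1 - 1 + 1) % n < c.1
        have e : (b.1 - 1 + 1) % n = b.1 := by
          rw [show b.1 - 1 + 1 = b.1 from by omega]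
          exact Nat.mod_eq_of_lt b.2
        omega
      · show a.1 ≤ (b.1 - 1) % n ∧ (b.1 - 1) % n < b.1
        have e : (b.1 - 1) % n = b.1 - 1 := Nat.mod_eq_of_lt (by omega)
        omega
    -- 1,2
    · refine ⟨Sum.inl (fm n hn (c.1 - 1)), ?_, Sum.inl (fm n hn (c.1 - 1 + 1)), ?_,
        tsg_adj_mod hn2 hn (c.1 - 1)⟩
      · show b.1 ≤ (c.1 - 1) % n ∧ (c.1 - 1) % n < c.1
        have e : (c.1 - 1) % n = c.1 - 1 := Nat.mod_eq_of_lt (by omega)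
        omega
      · show c.1 ≤ (c.1 - 1 + 1) % n ∧ (c.1 - 1 + 1) % n < d.1
        have e : (c.1 - 1 + 1) % n = c.1 := by
          rw [show c.1 - 1 + 1 = c.1 from by omega]
          exact Nat.mod_eq_of_lt c.2
        omega
    -- 1,3
    · exact ⟨Sum.inr 1, rfl, Sum.inl d, Or.inl le_rfl,
        (tsg_adj_inr (Or.inr (Or.inl ⟨rfl, hd⟩))).symm⟩
    -- 1,4
    · exact ⟨Sum.inl b, ⟨le_rfl, hbc'⟩, Sum.inr 2, rfl,
        tsg_adj_inr (Or.inr (Or.inr rfl))⟩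
    -- 2,0
    · exact ⟨Sum.inl c, ⟨le_rfl, hcd'⟩, Sum.inr 0, rfl,
        tsg_adj_inr (Or.inl ⟨rfl, hc⟩)⟩
    -- 2,1
    · refine ⟨Sum.inl (fm n hn (c.1 - 1 + 1)), ?_, Sum.inl (fm n hn (c.1 - 1)), ?_,
        (tsg_adj_mod hn2 hn (c.1 - 1)).symm⟩
      · show c.1 ≤ (c.1 - 1 + 1) % n ∧ (c.1 - 1 + 1) % n < d.1
        have e : (c.1 - 1 + 1) % n = c.1 := by
          rw [show c.1 - 1 + 1 = c.1 from by omega]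
          exact Nat.mod_eq_of_lt c.2
        omega
      · show b.1 ≤ (c.1 - 1) % n ∧ (c.1 - 1) % n < c.1
        have e : (c.1 - 1) % n = c.1 - 1 := Nat.mod_eq_of_lt (by omega)
        omega
    -- 2,3
    · refine ⟨Sum.inl (fm n hn (d.1 - 1)), ?_, Sum.inl (fm n hn (d.1 - 1 + 1)), ?_,
        tsg_adj_mod hn2 hn (d.1 - 1)⟩
      · show c.1 ≤ (d.1 - 1) % n ∧ (d.1 - 1) % n < d.1
        have e : (d.1 - 1) % n = d.1 - 1 := Nat.mod_eq_of_lt (by omega)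
        omega
      · show d.1 ≤ (d.1 - 1 + 1) % n ∨ (d.1 - 1 + 1) % n < a.1
        left
        have e : (d.1 - 1 + 1) % n = d.1 := by
          rw [show d.1 - 1 + 1 = d.1 from by omega]
          exact Nat.mod_eq_of_lt d.2
        omega
    -- 2,4
    · exact ⟨Sum.inl c, ⟨le_rfl, hcd'⟩, Sum.inr 2, rfl,
        tsg_adj_inr (Or.inr (Or.inr rfl))⟩
    -- 3,0
    · refine ⟨Sum.inl (fm n hn (a.1 + n - 1)), ?_, Sum.inl (fm n hn (a.1 + n - 1 + 1)), ?_,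
        tsg_adj_mod hn2 hn (a.1 + n - 1)⟩
      · show d.1 ≤ (a.1 + n - 1) % n ∨ (a.1 + n - 1) % n < a.1
        rcases Nat.eq_zero_or_pos a.1 with h0 | h0
        · left
          have e : (a.1 + n - 1) % n = n - 1 := by
            rw [show a.1 + n - 1 = n - 1 from by omega]
            exact Nat.mod_eq_of_lt (by omega)
          omega
        · right
          have e : (a.1 + n - 1) % n = a.1 - 1 := by
            rw [show a.1 + n - 1 = n + (a.1 - 1) from by omega, Nat.add_mod_left]
            exact Nat.mod_eq_of_lt (by omega)
          omega
      · show a.1 ≤ (a.1 + n - 1 + 1) % n ∧ (a.1 + n - 1 + 1) % n < b.1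
        have e : (a.1 + n - 1 + 1) % n = a.1 := by
          rw [show a.1 + n - 1 + 1 = n + a.1 from by omega, Nat.add_mod_left]
          exact Nat.mod_eq_of_lt a.2
        omega
    -- 3,1
    · exact ⟨Sum.inl d, Or.inl le_rfl, Sum.inr 1, rfl,
        tsg_adj_inr (Or.inr (Or.inl ⟨rfl, hd⟩))⟩
    -- 3,2
    · refine ⟨Sum.inl (fm n hn (d.1 - 1 + 1)), ?_, Sum.inl (fm n hn (d.1 - 1)), ?_,
        (tsg_adj_mod hn2 hn (d.1 - 1)).symm⟩
      · show d.1 ≤ (d.1 - 1 + 1) % n ∨ (d.1 - 1 + 1) % n < a.1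
        left
        have e : (d.1 - 1 + 1) % n = d.1 := by
          rw [show d.1 - 1 + 1 = d.1 from by omega]
          exact Nat.mod_eq_of_lt d.2
        omega
      · show c.1 ≤ (d.1 - 1) % n ∧ (d.1 - 1) % n < d.1
        have e : (d.1 - 1) % n = d.1 - 1 := Nat.mod_eq_of_lt (by omega)
        omega
    -- 3,4
    · exact ⟨Sum.inl d, Or.inl le_rfl, Sum.inr 2, rfl,
        tsg_adj_inr (Or.inr (Or.inr rfl))⟩
    -- 4,0
    · exact ⟨Sum.inr 2, rfl, Sum.inl a, ⟨le_rfl, hab'⟩,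
        (tsg_adj_inr (Or.inr (Or.inr rfl))).symm⟩
    -- 4,1
    · exact ⟨Sum.inr 2, rfl, Sum.inl b, ⟨le_rfl, hbc'⟩,
        (tsg_adj_inr (Or.inr (Or.inr rfl))).symm⟩
    -- 4,2
    · exact ⟨Sum.inr 2, rfl, Sum.inl c, ⟨le_rfl, hcd'⟩,
        (tsg_adj_inr (Or.inr (Or.inr rfl))).symm⟩
    -- 4,3
    · exact ⟨Sum.inr 2, rfl, Sum.inl d, Or.inl le_rfl,
        (tsg_adj_inr (Or.inr (Or.inr rfl))).symm⟩
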